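/- arXiv:2107.01244 — 3 statements merged into one kernel-verified Lean document; each statement's English description precedes it below -/
import Mathlib

section
/- Fix y ∈ ℝ^d, a vector a ∈ ℝ^d, a matrix b ∈ ℝ^{d×m}, a vector c ∈ ℝ^k, and a symmetric positive definite matrix R ∈ ℝ^{m×m}, and define H(α) := ½|c|² + ½ αᵀ R α + yᵀ(a + b α). Let e_1, …, e_m denote the standard basis of ℝ^m and let α* = -R^{-1} bᵀ y be the minimizer of H. Then for every i ∈ {1, …, m}: H(R^{-1} e_i) - H(0) - ½ (R^{-1})_{ii} = yᵀ b R^{-1} e_i = -⟨α*, e_i⟩. Consequently, the m+1 oracle evaluations H(0), H(R^{-1}e_1), …, H(R^{-1}e_m) determine the minimizer α* exactly. -/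
open Matrix

/-- With `H(α) = ½|c|² + ½ αᵀRα + yᵀ(a + bα)` and minimizer
`α* = -R⁻¹bᵀy`, for each standard basis vector `e_i` of `ℝ^m`:
`H(R⁻¹e_i) - H(0) - ½(R⁻¹)_{ii} = yᵀ b R⁻¹ e_i = -⟨α*, e_i⟩`, so that the `m+1` oracle
evaluations `H(0), H(R⁻¹e_1), …, H(R⁻¹e_m)` determine `α*` exactly. -/
theorem stmt6 {d m k : ℕ} (y a : Fin d → ℝ) (b : Matrix (Fin d) (Fin m) ℝ)
    (c : Fin k → ℝ) (R : Matrix (Fin m) (Fin m) ℝ) (hR : R.PosDef)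
    (H : (Fin m → ℝ) → ℝ)
    (hH : ∀ α, H α = (1 / 2 : ℝ) * (c ⬝ᵥ c) + (1 / 2 : ℝ) * (α ⬝ᵥ (R *ᵥ α))
      + y ⬝ᵥ (a + b *ᵥ α))
    (αstar : Fin m → ℝ) (hαstar : αstar = -(R⁻¹ *ᵥ (bᵀ *ᵥ y))) :
    ∀ i : Fin m,
      (H (R⁻¹ *ᵥ Pi.single i 1) - H 0 - (1 / 2 : ℝ) * R⁻¹ i i
          = y ⬝ᵥ (b *ᵥ (R⁻¹ *ᵥ Pi.single i 1)))
      ∧ (y ⬝ᵥ (b *ᵥ (R⁻¹ *ᵥ Pi.single i 1)) = -(αstar ⬝ᵥ Pi.single i 1)) := by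
  intro i
  have hdet : IsUnit R.det := isUnit_iff_ne_zero.mpr (ne_of_gt hR.det_pos)
  set v : Fin m → ℝ := R⁻¹ *ᵥ Pi.single i 1 with hv
  have h1 : R *ᵥ v = Pi.single i 1 := by
    rw [hv, mulVec_mulVec, R.mul_nonsing_inv hdet, one_mulVec]
  have hsym : R⁻¹ᵀ = R⁻¹ := by
    have := hR.1.inv
    simpa [Matrix.IsHermitian, conjTranspose_eq_transpose_of_trivial] using this
  have hvi : v ⬝ᵥ Pi.single i 1 = R⁻¹ i i := by
    simp [hv, dotProduct_single, mulVec_single]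
  constructor
  · rw [hH, hH]
    simp only [mulVec_zero, dotProduct_zero, zero_dotProduct, add_zero,
      dotProduct_add, h1, hvi]
    ring
  · rw [hαstar]
    have : y ⬝ᵥ (b *ᵥ v) = (bᵀ *ᵥ y) ⬝ᵥ v := by
      rw [dotProduct_mulVec, mulVec_transpose]
    rw [this]
    have h2 : (bᵀ *ᵥ y) ⬝ᵥ v = (R⁻¹ *ᵥ (bᵀ *ᵥ y)) ⬝ᵥ Pi.single i 1 := by
      rw [hv, dotProduct_mulVec, ← mulVec_transpose, hsym]
    rw [h2]
    simp
end

section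
/- Let S̄ ∈ ℝ^{d×d} be symmetric positive definite, n̄ ∈ ℝ^d, and C ∈ ℝ^{k×d}. Let p : ℝ^d → ℝ be the Gaussian density p(x) = (2π)^{-d/2} (det S̄)^{-1/2} exp(-½ (x - n̄)ᵀ S̄^{-1} (x - n̄)), and define the affine vector field V(x) := ½ S̄ Cᵀ C (x + n̄). Then V solves the Poisson equation: for every x ∈ ℝ^d, -(1/p(x)) ∇·(p V)(x) = ½|Cx|² - ½ Tr(Cᵀ C (S̄ + n̄ n̄ᵀ)). -/
open Matrix

/-- Partial derivative in the `i`-th coordinate direction. -/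
noncomputable def pd {d : ℕ} (i : Fin d) (f : (Fin d → ℝ) → ℝ) (x : Fin d → ℝ) : ℝ :=
  fderiv ℝ f x (Pi.single i 1)

/-- Divergence `∇·V = Σ_i ∂V_i/∂x_i` of a vector field. -/
noncomputable def divV {d : ℕ} (V : (Fin d → ℝ) → (Fin d → ℝ)) (x : Fin d → ℝ) : ℝ :=
  ∑ i, pd i (fun y => V y i) x

lemma pd_eq {d : ℕ} {f : (Fin d → ℝ) → ℝ} {f' : (Fin d → ℝ) →L[ℝ] ℝ} {x : Fin d → ℝ}
    (h : HasFDerivAt f f' x) (i : Fin d) : pd i f x = f' (Pi.single i 1) := by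
  rw [pd, h.fderiv]

/-- Let `p` be the Gaussian density with mean `n̄` and covariance `S̄ ≻ 0`,
and `V(x) = ½ S̄ CᵀC (x + n̄)`. Then `V` solves the Poisson equation
`-(1/p) ∇·(pV) = ½|Cx|² - ½ Tr(CᵀC(S̄ + n̄n̄ᵀ))`. -/
theorem stmt10 {d k : ℕ}
    (Sbar : Matrix (Fin d) (Fin d) ℝ) (hS : Sbar.PosDef) (nbar : Fin d → ℝ)
    (C : Matrix (Fin k) (Fin d) ℝ)
    (p : (Fin d → ℝ) → ℝ)
    (hp : ∀ x, p x = (2 * Real.pi) ^ (-(d : ℝ) / 2) * Sbar.det ^ (-(1 : ℝ) / 2)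
      * Real.exp (-(1 / 2 : ℝ) * ((x - nbar) ⬝ᵥ (Sbar⁻¹ *ᵥ (x - nbar)))))
    (V : (Fin d → ℝ) → (Fin d → ℝ))
    (hV : ∀ x, V x = (1 / 2 : ℝ) • ((Sbar * (Cᵀ * C)) *ᵥ (x + nbar))) :
    ∀ x : Fin d → ℝ,
      -(1 / p x) * divV (fun y => p y • V y) x
        = (1 / 2 : ℝ) * ((C *ᵥ x) ⬝ᵥ (C *ᵥ x))
          - (1 / 2 : ℝ) * Matrix.trace (Cᵀ * C * (Sbar + vecMulVec nbar nbar)) := by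
  intro x
  set A : Matrix (Fin d) (Fin d) ℝ := Sbar⁻¹ with hA
  set M : Matrix (Fin d) (Fin d) ℝ := Sbar * (Cᵀ * C) with hM
  set B : Matrix (Fin d) (Fin d) ℝ := Cᵀ * C with hB
  set c : ℝ := (2 * Real.pi) ^ (-(d : ℝ) / 2) * Sbar.det ^ (-(1 : ℝ) / 2) with hc
  -- basic facts
  have hdet : IsUnit Sbar.det := isUnit_iff_ne_zero.mpr hS.det_pos.ne'
  have hsymm : Sbarᵀ = Sbar := by simpa using hS.1.eq
  have hAsymm : Aᵀ = A := by rw [hA, Matrix.transpose_nonsing_inv, hsymm]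
  have hBsymm : Bᵀ = B := by rw [hB, Matrix.transpose_mul, Matrix.transpose_transpose]
  have hcpos : 0 < c := by
    apply mul_pos
    · exact Real.rpow_pos_of_pos (by positivity) _
    · exact Real.rpow_pos_of_pos hS.det_pos _
  have hppos : 0 < p x := by rw [hp]; exact mul_pos hcpos (Real.exp_pos _)
  set E : ℝ := Real.exp (-(1/2 : ℝ) * ∑ i, (x i - nbar i) * ∑ j, A i j * (x j - nbar j))
    with hE
  have hpxE : p x = c * E := by rw [hp, hE]; simp [dotProduct, mulVec]
  set g : Fin d → ℝ := A *ᵥ (x - nbar) with hg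
  have hAe : ∀ a b, A a b = A b a := fun a b => congrFun (congrFun hAsymm.symm a) b
  have hg1 : ∀ i, ∑ l, (x l - nbar l) * A l i = g i := by
    intro i
    rw [hg]
    simp only [mulVec, dotProduct, Pi.sub_apply]
    exact Finset.sum_congr rfl fun l _ => by rw [hAe l i]; ring
  have hg2 : ∀ i, ∑ j, A i j * (x j - nbar j) = g i := by
    intro i; rw [hg]; simp [mulVec, dotProduct]
  -- derivatives
  have pr : ∀ i : Fin d, HasFDerivAt (fun y : Fin d → ℝ => y i)
      (ContinuousLinearMap.proj i : (Fin d → ℝ) →L[ℝ] ℝ) x :=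
    fun i => (ContinuousLinearMap.proj i : (Fin d → ℝ) →L[ℝ] ℝ).hasFDerivAt
  have hQ := HasFDerivAt.fun_sum (fun i (_ : i ∈ Finset.univ) =>
      HasFDerivAt.fun_mul ((pr i).sub_const (nbar i))
        (HasFDerivAt.fun_sum (fun j (_ : j ∈ Finset.univ) =>
          (((pr j).sub_const (nbar j)).const_mul (A i j)))))
  have hP := ((hQ.const_mul (-(1/2 : ℝ))).exp).const_mul c
  rw [show (fun y : Fin d → ℝ => c * Real.exp (-(1/2 : ℝ) *
        ∑ i, (y i - nbar i) * ∑ j, A i j * (y j - nbar j))) = p by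
      funext y; rw [hp y]; simp [dotProduct, mulVec]] at hP
  have hVi : ∀ i : Fin d, HasFDerivAt (fun y => V y i)
      ((1/2 : ℝ) • ∑ j, M i j • (ContinuousLinearMap.proj j : (Fin d → ℝ) →L[ℝ] ℝ)) x := by
    intro i
    have h := (HasFDerivAt.fun_sum (fun j (_ : j ∈ Finset.univ) =>
        (((pr j).add_const (nbar j)).const_mul (M i j)))).const_mul (1/2 : ℝ)
    have hfun : (fun y : Fin d → ℝ => (1/2 : ℝ) * ∑ j, M i j * (y j + nbar j))
        = fun y => V y i := by
      funext y; rw [hV y]; simp [mulVec, dotProduct]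
    rw [hfun] at h
    exact h
  -- compute the divergence
  have hdiv : divV (fun y => p y • V y) x
      = ∑ i, (p x * ((1/2 : ℝ) * M i i)
          + V x i * (p x * (-(1/2 : ℝ) * (g i + g i)))) := by
    rw [divV]
    refine Finset.sum_congr rfl fun i _ => ?_
    have hF := hP.fun_mul (hVi i)
    have hfi : (fun y => (p y • V y) i) = fun y => p y * V y i := rfl
    rw [hfi, pd_eq hF i]
    simp only [ContinuousLinearMap.add_apply, ContinuousLinearMap.coe_smul',
      Pi.smul_apply, ContinuousLinearMap.coe_sum', Finset.sum_apply,
      ContinuousLinearMap.proj_apply, smul_eq_mul, Pi.single_apply, mul_ite,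
      mul_one, mul_zero, Finset.sum_ite_eq', Finset.mem_univ, if_true,
      Finset.sum_add_distrib]
    rw [hg1 i, hg2 i, hpxE]
    ring
  rw [hdiv]
  have hsum : ∑ i, (p x * ((1/2 : ℝ) * M i i) + V x i * (p x * (-(1/2 : ℝ) * (g i + g i))))
      = p x * ((1/2 : ℝ) * Matrix.trace M - g ⬝ᵥ V x) := by
    rw [Matrix.trace, dotProduct]
    simp only [Matrix.diag, Finset.mul_sum, mul_sub, ← Finset.sum_sub_distrib]
    refine Finset.sum_congr rfl fun i _ => by ring
  rw [hsum, neg_mul, one_div, inv_mul_eq_div, mul_comm (p x), mul_div_assoc,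
    div_self hppos.ne', mul_one, neg_sub]
  -- now pure matrix algebra : g ⬝ᵥ V x - (1/2) * trace M = RHS
  have hAM : A * M = B := by
    rw [hA, hM, ← Matrix.mul_assoc, Matrix.nonsing_inv_mul _ hdet, Matrix.one_mul, hB]
  have hgV : g ⬝ᵥ V x = (1/2 : ℝ) * ((x - nbar) ⬝ᵥ (B *ᵥ (x + nbar))) := by
    rw [hV x, dotProduct_smul, smul_eq_mul, hg, ← Matrix.vecMul_transpose, hAsymm,
      ← Matrix.dotProduct_mulVec, Matrix.mulVec_mulVec, hAM]
  have hcross : x ⬝ᵥ (B *ᵥ nbar) = nbar ⬝ᵥ (B *ᵥ x) := by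
    rw [Matrix.dotProduct_mulVec, ← hBsymm, Matrix.vecMul_transpose, dotProduct_comm,
      hBsymm]
  have hxBx : x ⬝ᵥ (B *ᵥ x) = (C *ᵥ x) ⬝ᵥ (C *ᵥ x) := by
    rw [hB, ← Matrix.mulVec_mulVec, Matrix.dotProduct_mulVec, Matrix.vecMul_transpose]
  have hexp : (x - nbar) ⬝ᵥ (B *ᵥ (x + nbar))
      = (C *ᵥ x) ⬝ᵥ (C *ᵥ x) - nbar ⬝ᵥ (B *ᵥ nbar) := by
    rw [Matrix.mulVec_add, sub_dotProduct, dotProduct_add,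
      dotProduct_add, hcross, hxBx]
    ring
  have htr2 : Matrix.trace (B * vecMulVec nbar nbar) = nbar ⬝ᵥ (B *ᵥ nbar) := by
    rw [Matrix.trace, dotProduct]
    refine Finset.sum_congr rfl fun i _ => ?_
    simp only [Matrix.diag_apply, Matrix.mul_apply, vecMulVec_apply, mulVec, dotProduct,
      Finset.mul_sum]
    exact Finset.sum_congr rfl fun j _ => by ring
  have htrM : Matrix.trace M = Matrix.trace (B * Sbar) := by
    rw [hM]; exact Matrix.trace_mul_comm Sbar B
  rw [hgV, hexp, htrM, Matrix.mul_add, Matrix.trace_add, htr2]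
  ring
end

section
/- Let A ∈ ℝ^{d×d}, B ∈ ℝ^{d×m}, C ∈ ℝ^{k×d}, let R ∈ ℝ^{m×m} be symmetric positive definite, and let P_T ∈ ℝ^{d×d} be symmetric positive definite. Suppose P : [0,T] → ℝ^{d×d} is differentiable with each P_t symmetric and solves the backward DRE -dP_t/dt = Aᵀ P_t + P_t A + Cᵀ C - P_t B R^{-1} Bᵀ P_t on [0,T] with terminal condition P_T. Then P_t is positive definite for every t ∈ [0,T]. -/
open Matrix Set Filter

attribute [local instance] Matrix.normedAddCommGroup Matrix.normedSpace

lemma aux_quad_bound {d e : ℕ} (M : Matrix (Fin d) (Fin e) ℝ) {x : Fin d → ℝ} {y : Fin e → ℝ}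
    (hx : ∀ i, |x i| ≤ 1) (hy : ∀ j, |y j| ≤ 1) :
    |x ⬝ᵥ (M *ᵥ y)| ≤ ∑ i, ∑ j, |M i j| := by
  have hrw : x ⬝ᵥ (M *ᵥ y) = ∑ i, ∑ j, x i * (M i j * y j) := by
    simp [dotProduct, mulVec, Finset.mul_sum]
  rw [hrw]
  calc |∑ i, ∑ j, x i * (M i j * y j)| ≤ ∑ i, |∑ j, x i * (M i j * y j)| :=
        Finset.abs_sum_le_sum_abs _ _
    _ ≤ ∑ i, ∑ j, |x i * (M i j * y j)| :=
        Finset.sum_le_sum fun i _ => Finset.abs_sum_le_sum_abs _ _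
    _ ≤ ∑ i, ∑ j, |M i j| := by
        refine Finset.sum_le_sum fun i _ => Finset.sum_le_sum fun j _ => ?_
        rw [abs_mul, abs_mul]
        calc |x i| * (|M i j| * |y j|) ≤ 1 * (|M i j| * 1) := by
              refine mul_le_mul (hx i) ?_ (by positivity) zero_le_one
              exact mul_le_mul_of_nonneg_left (hy j) (abs_nonneg _)
        _ = |M i j| := by ring

lemma aux_coord_le {d : ℕ} {x : EuclideanSpace ℝ (Fin d)} (hx : ‖x‖ = 1) (i : Fin d) :
    |x i| ≤ 1 := by
  have h0 : (0:ℝ) ≤ ∑ j, ‖x j‖ ^ 2 := Finset.sum_nonneg fun j _ => sq_nonneg _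
  have h1 : (∑ j, ‖x j‖ ^ 2) = 1 := by
    have h := EuclideanSpace.norm_eq x
    rw [hx] at h
    nlinarith [Real.sq_sqrt h0]
  have h2 : ‖x i‖ ^ 2 ≤ 1 :=
    h1 ▸ Finset.single_le_sum (fun j _ => sq_nonneg ‖x j‖) (Finset.mem_univ i)
  rw [Real.norm_eq_abs] at h2
  nlinarith [abs_nonneg (x i)]

lemma aux_deriv_nonneg {f : ℝ → ℝ} {a b f' : ℝ} (hab : a < b)
    (hf : HasDerivWithinAt f f' (Icc a b) a) (h0 : f a = 0)
    (hge : ∀ t ∈ Ioc a b, 0 ≤ f t) : 0 ≤ f' := by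
  have h1 := hasDerivWithinAt_iff_tendsto_slope.mp hf
  rw [Icc_diff_left] at h1
  haveI : (nhdsWithin a (Ioc a b)).NeBot := by
    rw [nhdsWithin_Ioc_eq_nhdsGT hab]; infer_instance
  refine ge_of_tendsto h1 (eventually_nhdsWithin_of_forall fun t ht => ?_)
  rw [slope_def_field]
  exact div_nonneg (by rw [h0, sub_zero]; exact hge t ht) (by linarith [ht.1])

lemma aux_reApply {d : ℕ} (M : Matrix (Fin d) (Fin d) ℝ) (x : EuclideanSpace ℝ (Fin d)) :
    (LinearMap.toContinuousLinearMap (Matrix.toEuclideanLin M)).reApplyInnerSelf x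
      = (WithLp.equiv 2 (Fin d → ℝ) x) ⬝ᵥ (M *ᵥ (WithLp.equiv 2 (Fin d → ℝ) x)) := by
  simp [ContinuousLinearMap.reApplyInnerSelf_apply, Matrix.toEuclideanLin_apply,
    PiLp.inner_apply, dotProduct, RCLike.inner_apply, mul_comm]

noncomputable def auxL {d : ℕ} (x : Fin d → ℝ) : Matrix (Fin d) (Fin d) ℝ →ₗ[ℝ] ℝ where
  toFun M := x ⬝ᵥ (M *ᵥ x)
  map_add' M N := by simp [Matrix.add_mulVec, dotProduct_add]
  map_smul' c M := by simp [Matrix.smul_mulVec, dotProduct_smul]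

set_option maxHeartbeats 2000000 in
/-- If `P : [0,T] → ℝ^{d×d}` is differentiable with each `P t` symmetric and
solves the backward DRE `-dP/dt = AᵀP + PA + CᵀC - PBR⁻¹BᵀP` on `[0,T]` with symmetric positive
definite terminal value `P T`, then `P t` is positive definite for every `t ∈ [0,T]`. -/
theorem stmt16 {d m k : ℕ} (T : ℝ) (hT : 0 < T)
    (A : Matrix (Fin d) (Fin d) ℝ) (B : Matrix (Fin d) (Fin m) ℝ)
    (C : Matrix (Fin k) (Fin d) ℝ) (R : Matrix (Fin m) (Fin m) ℝ) (hR : R.PosDef)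
    (P : ℝ → Matrix (Fin d) (Fin d) ℝ)
    (hPsymm : ∀ t ∈ Icc (0 : ℝ) T, (P t).IsSymm)
    (hPode : ∀ t ∈ Icc (0 : ℝ) T,
      HasDerivWithinAt P
        (-(Aᵀ * P t + P t * A + Cᵀ * C - P t * B * R⁻¹ * Bᵀ * P t)) (Icc (0 : ℝ) T) t)
    (hPT : (P T).PosDef) :
    ∀ t ∈ Icc (0 : ℝ) T, (P t).PosDef := by
  classical
  have hherm : ∀ t ∈ Icc (0 : ℝ) T, (P t).IsHermitian := by
    intro t ht
    have h := hPsymm t ht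
    ext i j
    rw [Matrix.conjTranspose_apply, star_trivial]
    exact (congrFun (congrFun h i) j : (P t)ᵀ i j = P t i j)
  rcases Nat.eq_zero_or_pos d with hd | hd
  · intro t ht
    refine PosDef.of_dotProduct_mulVec_pos (hherm t ht) fun x hx => ?_
    exfalso
    exact hx (funext fun i => absurd i.2 (by omega))
  haveI : Nonempty (Fin d) := ⟨⟨0, hd⟩⟩
  have hPc : ContinuousOn P (Icc (0:ℝ) T) := fun s hs => (hPode s hs).continuousWithinAt
  have hentry : ∀ i j, ContinuousOn (fun s => P s i j) (Icc (0:ℝ) T) := by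
    intro i j
    have hc : Continuous fun M : Matrix (Fin d) (Fin d) ℝ => M i j :=
      (continuous_apply j).comp (continuous_apply i)
    exact hc.comp_continuousOn hPc
  set eqv := WithLp.equiv 2 (Fin d → ℝ) with heqv
  set qf : ℝ → EuclideanSpace ℝ (Fin d) → ℝ :=
    fun t x => (eqv x) ⬝ᵥ (P t *ᵥ (eqv x)) with hqfdef
  have hqf_re : ∀ t x,
      (LinearMap.toContinuousLinearMap (Matrix.toEuclideanLin (P t))).reApplyInnerSelf x
        = qf t x := fun t x => aux_reApply (P t) x
  have hmin : ∀ t : ℝ, ∃ x : EuclideanSpace ℝ (Fin d), ‖x‖ = 1 ∧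
      ∀ y, ‖y‖ = 1 → qf t x ≤ qf t y := by
    intro t
    have hsne : (Metric.sphere (0 : EuclideanSpace ℝ (Fin d)) 1).Nonempty := by
      refine ⟨EuclideanSpace.single ⟨0, hd⟩ (1:ℝ), ?_⟩
      rw [mem_sphere_zero_iff_norm, EuclideanSpace.norm_single]
      simp
    obtain ⟨x, hxs, hxm⟩ := (isCompact_sphere (0 : EuclideanSpace ℝ (Fin d)) 1).exists_isMinOn
      hsne ((LinearMap.toContinuousLinearMap
        (Matrix.toEuclideanLin (P t))).reApplyInnerSelf_continuous.continuousOn)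
    rw [mem_sphere_zero_iff_norm] at hxs
    refine ⟨x, hxs, fun y hy => ?_⟩
    have h := hxm (show y ∈ Metric.sphere (0 : EuclideanSpace ℝ (Fin d)) 1 by
      rw [mem_sphere_zero_iff_norm]; exact hy)
    simp only [mem_setOf_eq] at h
    rw [hqf_re, hqf_re] at h
    exact h
  choose xm hxm1 hxm2 using hmin
  set g : ℝ → ℝ := fun t => qf t (xm t) with hgdef
  have hg_le : ∀ t (y : EuclideanSpace ℝ (Fin d)), ‖y‖ = 1 → g t ≤ qf t y := fun t => hxm2 t
  -- coordinates of unit vectors are bounded by 1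
  have hcoord : ∀ (x : EuclideanSpace ℝ (Fin d)), ‖x‖ = 1 → ∀ i, |eqv x i| ≤ 1 := by
    intro x hx i
    exact aux_coord_le hx i
  -- |qf s x - qf t x| estimate
  have hqf_diff : ∀ s t (x : EuclideanSpace ℝ (Fin d)), ‖x‖ = 1 →
      |qf s x - qf t x| ≤ ∑ i, ∑ j, |P s i j - P t i j| := by
    intro s t x hx
    have h1 : qf s x - qf t x = (eqv x) ⬝ᵥ ((P s - P t) *ᵥ (eqv x)) := by
      rw [hqfdef]
      simp [Matrix.sub_mulVec, dotProduct_sub]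
    rw [h1]
    have := aux_quad_bound (P s - P t) (hcoord x hx) (hcoord x hx)
    simpa using this
  -- continuity of g on Icc
  have hDelc : ∀ t, ContinuousOn (fun s => ∑ i, ∑ j, |P s i j - P t i j|) (Icc (0:ℝ) T) := by
    intro t
    refine continuousOn_finset_sum _ fun i _ => continuousOn_finset_sum _ fun j _ => ?_
    exact ((hentry i j).sub continuousOn_const).abs
  have hgcont : ContinuousOn g (Icc (0:ℝ) T) := by
    intro t ht
    have hΔ : Tendsto (fun s => ∑ i, ∑ j, |P s i j - P t i j|) (nhdsWithin t (Icc (0:ℝ) T))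
        (nhds 0) := by
      have h0 : (∑ i, ∑ j, |P t i j - P t i j| : ℝ) = 0 := by simp
      have := hDelc t t ht
      rwa [ContinuousWithinAt, h0] at this
    have hbound : ∀ s ∈ Icc (0:ℝ) T, dist (g s) (g t) ≤ ∑ i, ∑ j, |P s i j - P t i j| := by
      intro s _
      rw [Real.dist_eq, abs_sub_le_iff]
      constructor
      · have h1 : g s ≤ qf s (xm t) := hg_le s (xm t) (hxm1 t)
        have h3 := (abs_le.mp (hqf_diff s t (xm t) (hxm1 t))).2
        have h2 : qf t (xm t) = g t := rfl
        linarith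
      · have h1 : g t ≤ qf t (xm s) := hg_le t (xm s) (hxm1 s)
        have h3 := (abs_le.mp (hqf_diff s t (xm s) (hxm1 s))).1
        have h2 : qf s (xm s) = g s := rfl
        linarith
    rw [ContinuousWithinAt, tendsto_iff_dist_tendsto_zero]
    exact squeeze_zero' (eventually_nhdsWithin_of_forall fun s _ => dist_nonneg)
      (eventually_nhdsWithin_of_forall hbound) hΔ
  -- g T > 0
  have hne_vec : ∀ (x : EuclideanSpace ℝ (Fin d)), ‖x‖ = 1 → eqv x ≠ 0 := by
    intro x hx h
    have : x = 0 := by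
      apply (eqv.injective)
      rw [h]; rfl
    rw [this] at hx
    simp at hx
  have hgT : 0 < g T := by
    have h := hPT.dotProduct_mulVec_pos (x := eqv (xm T)) (hne_vec (xm T) (hxm1 T))
    have hstar : star (eqv (xm T)) = eqv (xm T) := funext fun i => star_trivial _
    rw [hstar] at h
    exact h
  -- constants
  set a : ℝ := ∑ i, ∑ j, |A i j| with hadef
  set c : ℝ := ∑ i, ∑ j, |(B * R⁻¹ * Bᵀ) i j| with hcdef
  have ha0 : 0 ≤ a := Finset.sum_nonneg fun i _ => Finset.sum_nonneg fun j _ => abs_nonneg _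
  have hc0 : 0 ≤ c := Finset.sum_nonneg fun i _ => Finset.sum_nonneg fun j _ => abs_nonneg _
  set ε : ℝ := g T / 2 with hεdef
  have hε0 : 0 < ε := by positivity
  set K : ℝ := 2 * a + ε * c + 1 with hKdef
  have hK0 : 0 < K := by positivity
  set bb : ℝ → ℝ := fun t => ε * Real.exp (K * (t - T)) with hbbdef
  have hbb0 : ∀ t, 0 < bb t := fun t => by positivity
  have hbbT : bb T = ε := by simp [hbbdef]
  have hbble : ∀ t ≤ T, bb t ≤ ε := by
    intro t htle
    have : Real.exp (K * (t - T)) ≤ 1 := by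
      rw [Real.exp_le_one_iff]
      nlinarith
    calc bb t = ε * Real.exp (K * (t - T)) := rfl
    _ ≤ ε * 1 := by nlinarith
    _ = ε := by ring
  have hbbderiv : ∀ t : ℝ, HasDerivAt bb (K * bb t) t := by
    intro t
    have h1 : HasDerivAt (fun s : ℝ => K * (s - T)) K t := by
      simpa using ((hasDerivAt_id t).sub_const T).const_mul K
    have h2 := (h1.exp).const_mul ε
    have hval : K * bb t = ε * (Real.exp (K * (t - T)) * K) := by
      simp [hbbdef]
      ring
    rw [hval]
    exact h2
  -- the key barrier claim
  have key : ∀ t ∈ Icc (0:ℝ) T, bb t ≤ g t := by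
    by_contra hcon
    push_neg at hcon
    obtain ⟨t₀, ht₀, ht₀'⟩ := hcon
    set S : Set ℝ := {t | t ∈ Icc (0:ℝ) T ∧ g t < bb t} with hSdef
    have hSne : S.Nonempty := ⟨t₀, ht₀, ht₀'⟩
    have hSbdd : BddAbove S := ⟨T, fun s hs => hs.1.2⟩
    set t₁ := sSup S with ht₁def
    have hFcont : ContinuousOn (fun t => g t - bb t) (Icc (0:ℝ) T) :=
      hgcont.sub (Continuous.continuousOn (by fun_prop))
    -- closed superset
    have hCclosed : IsClosed (Icc (0:ℝ) T ∩ (fun t => g t - bb t) ⁻¹' Iic 0) :=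
      hFcont.preimage_isClosed_of_isClosed isClosed_Icc isClosed_Iic
    have hSsub : S ⊆ Icc (0:ℝ) T ∩ (fun t => g t - bb t) ⁻¹' Iic 0 := by
      intro s hs
      exact ⟨hs.1, by simp [mem_preimage]; linarith [hs.2]⟩
    have ht₁mem : t₁ ∈ Icc (0:ℝ) T ∩ (fun t => g t - bb t) ⁻¹' Iic 0 :=
      hCclosed.closure_subset ((closure_mono hSsub) (csSup_mem_closure hSne hSbdd))
    obtain ⟨ht₁Icc, ht₁F⟩ := ht₁mem
    have hle : g t₁ ≤ bb t₁ := by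
      have h := ht₁F
      simp only [mem_preimage, mem_Iic] at h
      linarith
    -- t₁ < T
    have hFT : 0 < g T - bb T := by
      rw [hbbT, hεdef]; linarith
    have hevT := (hFcont T ⟨le_of_lt hT, le_refl T⟩).eventually (lt_mem_nhds hFT)
    rw [eventually_iff, Metric.mem_nhdsWithin_iff] at hevT
    obtain ⟨δ, hδ0, hδ⟩ := hevT
    have hST : ∀ s ∈ S, s ≤ T - δ := by
      intro s hs
      by_contra hcontra
      push_neg at hcontra
      have hsT : s ∈ Metric.ball T δ := by
        rw [Metric.mem_ball, Real.dist_eq, abs_sub_lt_iff]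
        constructor <;> linarith [hs.1.2]
      have h := hδ ⟨hsT, hs.1⟩
      simp only [mem_setOf_eq] at h
      linarith [hs.2]
    have ht₁T : t₁ < T := lt_of_le_of_lt (csSup_le hSne hST) (by linarith)
    -- bb t₁ ≤ g t₁ via right limit
    have hge : bb t₁ ≤ g t₁ := by
      have hsub : Ioc t₁ T ⊆ Icc (0:ℝ) T := fun s hs => ⟨le_trans ht₁Icc.1 (le_of_lt hs.1), hs.2⟩
      have htend : Tendsto (fun t => g t - bb t) (nhdsWithin t₁ (Ioc t₁ T))
          (nhds (g t₁ - bb t₁)) :=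
        (hFcont t₁ ht₁Icc).mono_left (nhdsWithin_mono _ hsub)
      haveI : (nhdsWithin t₁ (Ioc t₁ T)).NeBot := by
        rw [nhdsWithin_Ioc_eq_nhdsGT ht₁T]; infer_instance
      have hevge : ∀ s ∈ Ioc t₁ T, 0 ≤ g s - bb s := by
        intro s hs
        by_contra hneg
        push_neg at hneg
        have hsS : s ∈ S := ⟨hsub hs, by linarith⟩
        exact absurd (le_csSup hSbdd hsS) (not_le.mpr hs.1)
      have h := ge_of_tendsto htend (eventually_nhdsWithin_of_forall hevge)
      linarith
    have heq : g t₁ = bb t₁ := le_antisymm hle hge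
    set lam := bb t₁ with hlamdef
    have hlam0 : 0 < lam := hbb0 t₁
    have hlamε : lam ≤ ε := hbble t₁ ht₁Icc.2
    -- the minimizer is an eigenvector (Rayleigh)
    set x₁ := xm t₁ with hx₁def
    have hx₁n : ‖x₁‖ = 1 := hxm1 t₁
    set v := eqv x₁ with hvdef
    have hminOn : IsMinOn
        (LinearMap.toContinuousLinearMap (Matrix.toEuclideanLin (P t₁))).reApplyInnerSelf
        (Metric.sphere (0 : EuclideanSpace ℝ (Fin d)) ‖x₁‖) x₁ := by
      intro z hz
      rw [hx₁n, mem_sphere_zero_iff_norm] at hz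
      simp only [mem_setOf_eq]
      rw [hqf_re, hqf_re]
      exact hxm2 t₁ z hz
    have hsa : IsSelfAdjoint (LinearMap.toContinuousLinearMap (Matrix.toEuclideanLin (P t₁))) := by
      rw [ContinuousLinearMap.isSelfAdjoint_iff_isSymmetric]
      have hcoe : ((LinearMap.toContinuousLinearMap (Matrix.toEuclideanLin (P t₁))) :
          EuclideanSpace ℝ (Fin d) →ₗ[ℝ] EuclideanSpace ℝ (Fin d)) =
          Matrix.toEuclideanLin (P t₁) := LinearMap.coe_toContinuousLinearMap _
      rw [hcoe]
      exact Matrix.isHermitian_iff_isSymmetric.mp (hherm t₁ ht₁Icc)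
    have heig := hsa.eq_smul_self_of_isLocalExtrOn_real (hminOn.localize.isExtr)
    have hray : (LinearMap.toContinuousLinearMap
        (Matrix.toEuclideanLin (P t₁))).rayleighQuotient x₁ = lam := by
      rw [ContinuousLinearMap.rayleighQuotient, hqf_re, hx₁n]
      have : qf t₁ x₁ = g t₁ := rfl
      rw [this, heq]
      simp
    rw [hray] at heig
    -- plain-vector eigen equation
    have hPv : P t₁ *ᵥ v = lam • v := by
      have h1 := congrArg eqv heig
      simpa [heqv, hvdef, Matrix.toEuclideanLin_apply, WithLp.ofLp_smul,
        LinearMap.coe_toContinuousLinearMap'] using h1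
    have hsymm₁ : (P t₁)ᵀ = P t₁ := hPsymm t₁ ht₁Icc
    have hvP : v ᵥ* (P t₁) = lam • v := by
      have h := Matrix.vecMul_transpose (P t₁)ᵀ v
      rw [Matrix.transpose_transpose, hsymm₁] at h
      rw [h, hPv]
    -- derivative of the quadratic form along the minimizing direction
    set D : Matrix (Fin d) (Fin d) ℝ :=
      -(Aᵀ * P t₁ + P t₁ * A + Cᵀ * C - P t₁ * B * R⁻¹ * Bᵀ * P t₁) with hDdef
    have hφ : HasDerivWithinAt (fun t => v ⬝ᵥ (P t *ᵥ v)) (v ⬝ᵥ (D *ᵥ v)) (Icc (0:ℝ) T) t₁ := by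
      have hL := ((auxL v).toContinuousLinearMap.hasFDerivAt
        (x := P t₁)).comp_hasDerivWithinAt t₁ (hPode t₁ ht₁Icc)
      exact hL
    have hψ : HasDerivWithinAt (fun t => v ⬝ᵥ (P t *ᵥ v) - bb t)
        (v ⬝ᵥ (D *ᵥ v) - K * bb t₁) (Icc (0:ℝ) T) t₁ :=
      hφ.sub ((hbbderiv t₁).hasDerivWithinAt)
    have hψ0 : v ⬝ᵥ (P t₁ *ᵥ v) - bb t₁ = 0 := by
      have h : v ⬝ᵥ (P t₁ *ᵥ v) = g t₁ := rfl
      rw [h, heq]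
      ring
    have hψge : ∀ s ∈ Ioc t₁ T, 0 ≤ v ⬝ᵥ (P s *ᵥ v) - bb s := by
      intro s hs
      have hsIcc : s ∈ Icc (0:ℝ) T := ⟨le_trans ht₁Icc.1 (le_of_lt hs.1), hs.2⟩
      have h1 : g s ≤ v ⬝ᵥ (P s *ᵥ v) := hg_le s x₁ hx₁n
      have h2 : bb s ≤ g s := by
        by_contra hneg
        push_neg at hneg
        exact absurd (le_csSup hSbdd ⟨hsIcc, hneg⟩) (not_le.mpr hs.1)
      linarith
    have hD0 := aux_deriv_nonneg ht₁T (hψ.mono (Icc_subset_Icc ht₁Icc.1 le_rfl)) hψ0 hψge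
    -- compute the derivative using the eigen equation
    have hterm1 : v ⬝ᵥ ((Aᵀ * P t₁) *ᵥ v) = lam * (v ⬝ᵥ (A *ᵥ v)) := by
      rw [← Matrix.mulVec_mulVec, hPv, Matrix.mulVec_smul, dotProduct_smul, smul_eq_mul]
      congr 1
      rw [Matrix.dotProduct_mulVec, Matrix.vecMul_transpose, dotProduct_comm]
    have hterm2 : v ⬝ᵥ ((P t₁ * A) *ᵥ v) = lam * (v ⬝ᵥ (A *ᵥ v)) := by
      rw [← Matrix.mulVec_mulVec, Matrix.dotProduct_mulVec, hvP, smul_dotProduct, smul_eq_mul]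
    have hterm3 : 0 ≤ v ⬝ᵥ ((Cᵀ * C) *ᵥ v) := by
      rw [← Matrix.mulVec_mulVec, Matrix.dotProduct_mulVec, Matrix.vecMul_transpose]
      simp only [dotProduct]
      exact Finset.sum_nonneg fun i _ => mul_self_nonneg _
    have hterm4 : v ⬝ᵥ ((P t₁ * B * R⁻¹ * Bᵀ * P t₁) *ᵥ v)
        = lam * (lam * (v ⬝ᵥ ((B * R⁻¹ * Bᵀ) *ᵥ v))) := by
      have hassoc : P t₁ * B * R⁻¹ * Bᵀ * P t₁ = P t₁ * (B * R⁻¹ * Bᵀ) * P t₁ := by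
        simp only [Matrix.mul_assoc]
      rw [hassoc, ← Matrix.mulVec_mulVec, hPv, Matrix.mulVec_smul, dotProduct_smul, smul_eq_mul,
        ← Matrix.mulVec_mulVec, Matrix.dotProduct_mulVec, hvP, smul_dotProduct, smul_eq_mul]
    have hDval : v ⬝ᵥ (D *ᵥ v) = -(lam * (v ⬝ᵥ (A *ᵥ v)) + lam * (v ⬝ᵥ (A *ᵥ v))
        + (v ⬝ᵥ ((Cᵀ * C) *ᵥ v)) - lam * (lam * (v ⬝ᵥ ((B * R⁻¹ * Bᵀ) *ᵥ v)))) := by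
      rw [hDdef, Matrix.neg_mulVec, dotProduct_neg, Matrix.sub_mulVec, Matrix.add_mulVec,
        Matrix.add_mulVec, dotProduct_sub, dotProduct_add, dotProduct_add,
        hterm1, hterm2, hterm4]
    rw [hDval] at hD0
    have hqa : |v ⬝ᵥ (A *ᵥ v)| ≤ a := by
      rw [hadef]
      exact aux_quad_bound A (hcoord x₁ hx₁n) (hcoord x₁ hx₁n)
    have hnc : |v ⬝ᵥ ((B * R⁻¹ * Bᵀ) *ᵥ v)| ≤ c := by
      rw [hcdef]
      exact aux_quad_bound _ (hcoord x₁ hx₁n) (hcoord x₁ hx₁n)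
    have hq1 : -a ≤ v ⬝ᵥ (A *ᵥ v) := (abs_le.mp hqa).1
    have hn1 : v ⬝ᵥ ((B * R⁻¹ * Bᵀ) *ᵥ v) ≤ c := (abs_le.mp hnc).2
    have hmul1 : -(lam * (v ⬝ᵥ (A *ᵥ v))) ≤ lam * a := by nlinarith
    have hmul2 : lam * (lam * (v ⬝ᵥ ((B * R⁻¹ * Bᵀ) *ᵥ v))) ≤ lam * (ε * c) := by
      nlinarith [mul_le_mul_of_nonneg_left hn1 (mul_pos hlam0 hlam0).le,
        mul_le_mul_of_nonneg_right hlamε (mul_nonneg hlam0.le hc0)]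
    have hKlam : K * lam = 2 * (lam * a) + lam * (ε * c) + lam := by
      rw [hKdef]; ring
    linarith
  -- conclusion
  intro t ht
  refine PosDef.of_dotProduct_mulVec_pos (hherm t ht) fun x hx => ?_
  have hbbg := key t ht
  set y : EuclideanSpace ℝ (Fin d) := eqv.symm x with hydef
  have hy0 : y ≠ 0 := by
    intro h
    apply hx
    have := congrArg eqv h
    simp [hydef] at this
    rw [this]; rfl
  have hny : 0 < ‖y‖ := norm_pos_iff.mpr hy0
  set u : EuclideanSpace ℝ (Fin d) := (‖y‖)⁻¹ • y with hudef
  have hu1 : ‖u‖ = 1 := by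
    rw [hudef, norm_smul, norm_inv, norm_norm]
    field_simp
  have hqfu : 0 < qf t u := lt_of_lt_of_le (hbb0 t) (le_trans hbbg (hg_le t u hu1))
  have hequ : eqv u = (‖y‖)⁻¹ • x := by
    rw [hudef, hydef, heqv]
    simp [WithLp.ofLp_smul]
  have hexp : qf t u = (‖y‖)⁻¹ * ((‖y‖)⁻¹ * (x ⬝ᵥ (P t *ᵥ x))) := by
    rw [hqfdef]
    simp only [hequ]
    rw [smul_dotProduct, Matrix.mulVec_smul, dotProduct_smul]
    simp [smul_eq_mul]
  have hstar : star x = x := funext fun i => star_trivial _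
  have hX : x ⬝ᵥ (P t *ᵥ x) = ‖y‖ * (‖y‖ * qf t u) := by
    rw [hexp]
    field_simp
  rw [hstar, hX]
  exact mul_pos hny (mul_pos hny hqfu)
end
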